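/- Let G be a finite connected simple graph and let x ≠ y be vertices of G. Then, as α → 1 from below, κ_α(x,y)/(1−α) converges to inf { ∇_{xy} Δf : f is 1-Lipschitz and ∇_{yx} f = 1 }; that is, the Lin–Lu–Yau curvature defined as the limit of the normalized α-lazy Ollivier curvatures equals the limit-free Laplacian formulation. -/

import Mathlib

open scoped BigOperators

namespace LLY

variable {V : Type*}

/-- Degree of a vertex (as `Nat.card` of its neighbor set; agrees with the usual
degree in a locally finite graph). -/
noncomputable def deg (G : SimpleGraph V) (u : V) : ℕ := Nat.card (G.neighborSet u)

/-- `G` is locally finite. -/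
def LocFin (G : SimpleGraph V) : Prop := ∀ v : V, (G.neighborSet v).Finite

/-- `f` is 1-Lipschitz with respect to the graph distance of `G`. -/
def Lip1 (G : SimpleGraph V) (f : V → ℝ) : Prop :=
  ∀ a b : V, |f a - f b| ≤ (G.dist a b : ℝ)

/-- The (normalized) graph Laplacian `Δf(u) = (1/d(u)) ∑_{v ∈ N(u)} (f v - f u)`. -/
noncomputable def lap (G : SimpleGraph V) (f : V → ℝ) (u : V) : ℝ :=
  (1 / (deg G u : ℝ)) * ∑ᶠ v ∈ G.neighborSet u, (f v - f u)

/-- The gradient `∇_{xy} f = (f x - f y)/d(x,y)`. -/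
noncomputable def grad (G : SimpleGraph V) (f : V → ℝ) (x y : V) : ℝ :=
  (f x - f y) / (G.dist x y : ℝ)

/-- Lin–Lu–Yau curvature of the pair `{x,y}` (limit-free Münch–Wojciechowski form):
`κ(x,y) = inf { ∇_{xy} Δf : f 1-Lipschitz, ∇_{yx} f = 1 }`. -/
noncomputable def kappa (G : SimpleGraph V) (x y : V) : ℝ :=
  sInf {k : ℝ | ∃ f : V → ℝ, Lip1 G f ∧ grad G f y x = 1 ∧ k = grad G (lap G f) x y}

end LLY

namespace LLY

variable {V : Type*}

open Classical in
/-- The `α`-lazy random walk distribution at `x`: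
`m_x^α(v) = α` if `v = x`, `(1-α)/d(x)` if `v ∈ N(x)`, and `0` otherwise. -/
noncomputable def mAlpha (G : SimpleGraph V) (α : ℝ) (x : V) : V → ℝ := fun v =>
  if v = x then α else if v ∈ G.neighborSet x then (1 - α) / (deg G x : ℝ) else 0

/-- `A` is a coupling between the distributions `m₁` and `m₂` on a finite vertex set. -/
def IsCouplingW [Fintype V] (A : V × V → ℝ) (m₁ m₂ : V → ℝ) : Prop :=
  (∀ p : V × V, 0 ≤ A p ∧ A p ≤ 1) ∧
  (∀ u : V, ∑ v : V, A (u, v) = m₁ u) ∧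
  (∀ v : V, ∑ u : V, A (u, v) = m₂ v)

/-- The Wasserstein-1 transportation distance between `m₁` and `m₂`:
the infimum of `∑_{u,v} A(u,v) d(u,v)` over all couplings `A`. -/
noncomputable def W (G : SimpleGraph V) [Fintype V] (m₁ m₂ : V → ℝ) : ℝ :=
  sInf {c : ℝ | ∃ A : V × V → ℝ, IsCouplingW A m₁ m₂ ∧
    c = ∑ p : V × V, A p * (G.dist p.1 p.2 : ℝ)}

/-- The `α`-lazy Ollivier curvature `κ_α(x,y) = 1 - W(m_x^α, m_y^α)/d(x,y)`. -/
noncomputable def kappaAlpha (G : SimpleGraph V) [Fintype V] (α : ℝ) (x y : V) : ℝ :=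
  1 - W G (mAlpha G α x) (mAlpha G α y) / (G.dist x y : ℝ)

end LLY

namespace LLY
namespace MW
set_option linter.unusedSectionVars false

open Finset
open scoped Classical

variable {V : Type*} [Fintype V] {G : SimpleGraph V}

noncomputable def nbr (G : SimpleGraph V) [Fintype V] (u : V) : Finset V :=
  (G.neighborSet u).toFinset

lemma mem_nbr {u v : V} : v ∈ nbr G u ↔ G.Adj u v := by
  simp [nbr]

lemma deg_eq_card (u : V) : deg G u = (nbr G u).card := by
  rw [deg, nbr, Nat.card_eq_fintype_card, Set.toFinset_card]

lemma lap_eq (f : V → ℝ) (u : V) :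
    lap G f u = (1 / (deg G u : ℝ)) * ∑ v ∈ nbr G u, (f v - f u) := by
  rw [lap, ← Set.coe_toFinset (G.neighborSet u), finsum_mem_coe_finset]
  rfl

lemma exists_adj (hconn : G.Connected) [Nontrivial V] (u : V) : ∃ v, G.Adj u v := by
  obtain ⟨w, hw⟩ := exists_ne u
  obtain ⟨p⟩ := hconn u w
  cases p with
  | nil => exact absurd rfl (Ne.symm hw)
  | cons h _ => exact ⟨_, h⟩

lemma deg_pos (hconn : G.Connected) [Nontrivial V] (u : V) : 0 < deg G u := by
  obtain ⟨v, hv⟩ := exists_adj hconn u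
  rw [deg_eq_card]
  exact card_pos.2 ⟨v, mem_nbr.2 hv⟩

lemma deg_pos' (hconn : G.Connected) [Nontrivial V] (u : V) : (0 : ℝ) < (deg G u : ℝ) := by
  exact_mod_cast deg_pos hconn u

lemma dist_tri (hconn : G.Connected) (a b c : V) :
    (G.dist a c : ℝ) ≤ (G.dist a b : ℝ) + (G.dist b c : ℝ) := by
  exact_mod_cast hconn.dist_triangle (v := b)

lemma dist_comm' (a b : V) : (G.dist a b : ℝ) = (G.dist b a : ℝ) := by
  rw [SimpleGraph.dist_comm]

lemma adj_dist_one {u v : V} (h : G.Adj u v) : (G.dist u v : ℝ) = 1 := by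
  exact_mod_cast SimpleGraph.dist_eq_one_iff_adj.2 h

lemma lip_abs_le_one {f : V → ℝ} (hf : Lip1 G f) {u v : V} (h : G.Adj u v) :
    |f v - f u| ≤ 1 := by
  have := hf v u
  rwa [dist_comm', adj_dist_one h] at this

lemma abs_lap_le_one (hconn : G.Connected) [Nontrivial V] {f : V → ℝ} (hf : Lip1 G f) (u : V) :
    |lap G f u| ≤ 1 := by
  have hd := deg_pos' hconn u
  rw [lap_eq]
  rw [abs_mul, abs_of_pos (by positivity : (0:ℝ) < 1 / (deg G u : ℝ))]
  have h1 : |∑ v ∈ nbr G u, (f v - f u)| ≤ ∑ v ∈ nbr G u, |f v - f u| :=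
    Finset.abs_sum_le_sum_abs _ _
  have h2 : ∑ v ∈ nbr G u, |f v - f u| ≤ ∑ v ∈ nbr G u, (1:ℝ) := by
    refine Finset.sum_le_sum fun v hv => lip_abs_le_one hf (mem_nbr.1 hv)
  have h3 : (∑ v ∈ nbr G u, (1:ℝ)) = (deg G u : ℝ) := by
    rw [Finset.sum_const, nsmul_eq_mul, mul_one, deg_eq_card]
  calc 1 / (deg G u : ℝ) * |∑ v ∈ nbr G u, (f v - f u)|
      ≤ 1 / (deg G u : ℝ) * (deg G u : ℝ) := by
        apply mul_le_mul_of_nonneg_left (h1.trans (h2.trans_eq h3)) (by positivity)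
    _ = 1 := by field_simp

lemma grad_lap_mem_bdd (hconn : G.Connected) [Nontrivial V] {x y : V} (hxy : x ≠ y) :
    ∀ k ∈ {k : ℝ | ∃ f : V → ℝ, Lip1 G f ∧ grad G f y x = 1 ∧ k = grad G (lap G f) x y},
      (-2 : ℝ) ≤ k := by
  rintro k ⟨f, hf, -, rfl⟩
  have hD : (0:ℝ) < (G.dist x y : ℝ) := by
    exact_mod_cast hconn.pos_dist_of_ne hxy
  have hD1 : (1:ℝ) ≤ (G.dist x y : ℝ) := by
    exact_mod_cast hconn.pos_dist_of_ne hxy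
  have h1 := abs_lap_le_one hconn hf x
  have h2 := abs_lap_le_one hconn hf y
  have : |lap G f x - lap G f y| ≤ 2 := by
    calc |lap G f x - lap G f y| ≤ |lap G f x| + |lap G f y| := abs_sub _ _
      _ ≤ 2 := by linarith
  rw [grad]
  have habs : |(lap G f x - lap G f y) / (G.dist x y : ℝ)| ≤ 2 := by
    rw [abs_div, abs_of_pos hD]
    calc |lap G f x - lap G f y| / (G.dist x y : ℝ) ≤ 2 / (G.dist x y : ℝ) := by
          exact div_le_div_of_nonneg_right this hD.le
      _ ≤ 2 := by
          rw [div_le_iff₀ hD]; nlinarith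
  linarith [neg_abs_le ((lap G f x - lap G f y) / (G.dist x y : ℝ)), habs]


lemma mAlpha_eq (α : ℝ) (x v : V) :
    mAlpha G α x v = if v = x then α else if v ∈ nbr G x then (1 - α) / (deg G x : ℝ) else 0 := by
  simp [mAlpha, mem_nbr, SimpleGraph.mem_neighborSet]

lemma mAlpha_nonneg {α : ℝ} (hα0 : 0 ≤ α) (hα1 : α ≤ 1) (x v : V) : 0 ≤ mAlpha G α x v := by
  rw [mAlpha_eq]
  split_ifs with h1 h2
  · exact hα0
  · exact div_nonneg (by linarith) (Nat.cast_nonneg _)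
  · exact le_refl 0

lemma sum_mul_mAlpha (hconn : G.Connected) [Nontrivial V] (α : ℝ) (x : V) (f : V → ℝ) :
    ∑ v, f v * mAlpha G α x v = f x + (1 - α) * lap G f x := by
  have hd := deg_pos' hconn x
  have hx : x ∉ nbr G x := by simp [mem_nbr]
  have step : ∀ v, f v * mAlpha G α x v =
      (if v = x then α * f x else 0) +
      (if v ∈ nbr G x then (1 - α) / (deg G x : ℝ) * f v else 0) := by
    intro v
    rw [mAlpha_eq]
    split_ifs with h1 h2
    · exact absurd (h1 ▸ h2) hx
    · subst h1; ring
    · ring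
    · ring
  rw [Finset.sum_congr rfl fun v _ => step v, Finset.sum_add_distrib,
    Finset.sum_ite_eq' Finset.univ x (fun _ => α * f x), if_pos (Finset.mem_univ x),
    Finset.sum_ite_mem, Finset.univ_inter, ← Finset.mul_sum]
  rw [lap_eq, Finset.sum_sub_distrib, Finset.sum_const, nsmul_eq_mul, ← deg_eq_card]
  field_simp
  ring

lemma sum_mAlpha (hconn : G.Connected) [Nontrivial V] (α : ℝ) (x : V) :
    ∑ v, mAlpha G α x v = 1 := by
  have := sum_mul_mAlpha hconn α x (fun _ => 1)
  simpa [lap_eq] using this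

noncomputable def cost (G : SimpleGraph V) [Fintype V] (A : V × V → ℝ) : ℝ :=
  ∑ p : V × V, A p * (G.dist p.1 p.2 : ℝ)

lemma sum_fst_coupling {A : V × V → ℝ} {m₁ m₂ : V → ℝ} (hA : IsCouplingW A m₁ m₂)
    (f : V → ℝ) : ∑ p : V × V, f p.1 * A p = ∑ v, f v * m₁ v := by
  rw [Fintype.sum_prod_type]
  refine Finset.sum_congr rfl fun u _ => ?_
  rw [← hA.2.1 u, Finset.mul_sum]

lemma sum_snd_coupling {A : V × V → ℝ} {m₁ m₂ : V → ℝ} (hA : IsCouplingW A m₁ m₂)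
    (f : V → ℝ) : ∑ p : V × V, f p.2 * A p = ∑ v, f v * m₂ v := by
  rw [Fintype.sum_prod_type_right]
  refine Finset.sum_congr rfl fun v _ => ?_
  rw [← hA.2.2 v, Finset.mul_sum]

lemma easy_dual (hconn : G.Connected) {A : V × V → ℝ} {m₁ m₂ : V → ℝ}
    (hA : IsCouplingW A m₁ m₂) {f : V → ℝ} (hf : Lip1 G f) :
    (∑ v, f v * m₁ v) - (∑ v, f v * m₂ v) ≤ cost G A := by
  rw [← sum_fst_coupling hA f, ← sum_snd_coupling hA f, ← Finset.sum_sub_distrib, cost]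
  refine Finset.sum_le_sum fun p _ => ?_
  have h1 : f p.1 * A p - f p.2 * A p = (f p.1 - f p.2) * A p := by ring
  rw [h1, mul_comm (A p)]
  exact mul_le_mul_of_nonneg_right ((le_abs_self _).trans (hf p.1 p.2)) (hA.1 p).1


lemma entry_le_one {A : V × V → ℝ} {m₁ : V → ℝ}
    (hpos : ∀ p : V × V, 0 ≤ A p) (hrow : ∀ u : V, ∑ v : V, A (u, v) = m₁ u)
    (hm₁ : ∀ u, m₁ u ≤ 1) (p : V × V) : A p ≤ 1 := by
  have : A (p.1, p.2) ≤ ∑ v : V, A (p.1, v) :=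
    Finset.single_le_sum (fun v _ => hpos (p.1, v)) (Finset.mem_univ p.2)
  calc A p = A (p.1, p.2) := by rfl
    _ ≤ m₁ p.1 := by rw [← hrow p.1]; exact this
    _ ≤ 1 := hm₁ p.1

lemma m_le_one {m : V → ℝ} (hm : ∀ v, 0 ≤ m v) (hs : ∑ v, m v = 1) (u : V) : m u ≤ 1 := by
  calc m u ≤ ∑ v, m v := Finset.single_le_sum (fun v _ => hm v) (Finset.mem_univ u)
    _ = 1 := hs

lemma prod_coupling {m₁ m₂ : V → ℝ} (hm₁ : ∀ v, 0 ≤ m₁ v) (hm₂ : ∀ v, 0 ≤ m₂ v)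
    (hs₁ : ∑ v, m₁ v = 1) (hs₂ : ∑ v, m₂ v = 1) :
    IsCouplingW (fun p : V × V => m₁ p.1 * m₂ p.2) m₁ m₂ := by
  refine ⟨fun p => ⟨mul_nonneg (hm₁ p.1) (hm₂ p.2), ?_⟩, fun u => ?_, fun v => ?_⟩
  · exact mul_le_one₀ (m_le_one hm₁ hs₁ p.1) (hm₂ p.2) (m_le_one hm₂ hs₂ p.2)
  · simp only
    rw [← Finset.mul_sum, hs₂, mul_one]
  · simp only
    rw [← Finset.sum_mul, hs₁, one_mul]

lemma exists_optimal_coupling {m₁ m₂ : V → ℝ}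
    (hne : ∃ A : V × V → ℝ, IsCouplingW A m₁ m₂) :
    ∃ A : V × V → ℝ, IsCouplingW A m₁ m₂ ∧
      ∀ B : V × V → ℝ, IsCouplingW B m₁ m₂ → cost G A ≤ cost G B := by
  set K : Set ((V × V) → ℝ) := {A | IsCouplingW A m₁ m₂} with hK
  have hsub : K ⊆ Set.univ.pi (fun _ : V × V => Set.Icc (0:ℝ) 1) := by
    intro A hA
    intro p _
    exact ⟨(hA.1 p).1, (hA.1 p).2⟩
  have hclosed : IsClosed K := by
    have : K = (⋂ p : V × V, {A : (V × V) → ℝ | 0 ≤ A p ∧ A p ≤ 1}) ∩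
        ((⋂ u : V, {A : (V × V) → ℝ | ∑ v, A (u, v) = m₁ u}) ∩
         (⋂ v : V, {A : (V × V) → ℝ | ∑ u, A (u, v) = m₂ v})) := by
      ext A
      simp only [hK, Set.mem_setOf_eq, IsCouplingW, Set.mem_inter_iff, Set.mem_iInter]
    rw [this]
    refine IsClosed.inter (isClosed_iInter fun p => ?_)
      (IsClosed.inter (isClosed_iInter fun u => ?_) (isClosed_iInter fun v => ?_))
    · exact IsClosed.inter (isClosed_le continuous_const (continuous_apply p))
        (isClosed_le (continuous_apply p) continuous_const)
    · exact isClosed_eq (continuous_finset_sum _ fun v _ => continuous_apply (u, v))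
        continuous_const
    · exact isClosed_eq (continuous_finset_sum _ fun u _ => continuous_apply (u, v))
        continuous_const
  have hcomp : IsCompact K :=
    (isCompact_univ_pi fun _ => isCompact_Icc).of_isClosed_subset hclosed hsub
  have hcont : Continuous (cost G) :=
    continuous_finset_sum _ fun p _ => (continuous_apply p).mul continuous_const
  obtain ⟨A, hAK, hmin⟩ := hcomp.exists_isMinOn hne hcont.continuousOn
  exact ⟨A, hAK, fun B hB => hmin hB⟩

lemma W_eq_cost {m₁ m₂ : V → ℝ} {A : V × V → ℝ} (hA : IsCouplingW A m₁ m₂)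
    (hmin : ∀ B : V × V → ℝ, IsCouplingW B m₁ m₂ → cost G A ≤ cost G B) :
    W G m₁ m₂ = cost G A := by
  apply IsLeast.csInf_eq
  constructor
  · exact ⟨A, hA, rfl⟩
  · rintro c ⟨B, hB, rfl⟩
    exact hmin B hB

lemma W_ge (hconn : G.Connected) {m₁ m₂ : V → ℝ}
    (hne : ∃ A : V × V → ℝ, IsCouplingW A m₁ m₂) {f : V → ℝ} (hf : Lip1 G f) :
    (∑ v, f v * m₁ v) - (∑ v, f v * m₂ v) ≤ W G m₁ m₂ := by
  obtain ⟨A, hA, hmin⟩ := exists_optimal_coupling hne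
  rw [W_eq_cost hA hmin]
  exact easy_dual hconn hA hf


noncomputable def dd (G : SimpleGraph V) (p : V × V) : ℝ := (G.dist p.1 p.2 : ℝ)

def addList : V → List (V × V) → V → List (V × V)
  | u, [], v => [(u, v)]
  | u, (a, b) :: Q, v => (u, b) :: addList a Q v

lemma addList_map_fst (u v : V) (Q : List (V × V)) :
    (addList u Q v).map Prod.fst = u :: Q.map Prod.fst := by
  induction Q generalizing u with
  | nil => rfl
  | cons q Q ih => obtain ⟨a, b⟩ := q; simp [addList, ih]

lemma addList_map_snd (u v : V) (Q : List (V × V)) :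
    (addList u Q v).map Prod.snd = Q.map Prod.snd ++ [v] := by
  induction Q generalizing u with
  | nil => rfl
  | cons q Q ih => obtain ⟨a, b⟩ := q; simp [addList, ih]

lemma sum_count_mul (l : List (V × V)) (F : V × V → ℝ) :
    ∑ p : V × V, (l.count p : ℝ) * F p = (l.map F).sum := by
  induction l with
  | nil => simp
  | cons a l ih =>
    simp only [List.count_cons, List.map_cons, List.sum_cons]
    have hstep : ∀ p : V × V, ((l.count p + if a == p then 1 else 0 : ℕ) : ℝ) * F p
        = (l.count p : ℝ) * F p + (if a = p then F p else 0) := by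
      intro p
      by_cases h : a = p <;> simp [h] <;> ring
    rw [Finset.sum_congr rfl fun p _ => hstep p, Finset.sum_add_distrib, ih,
      Finset.sum_ite_eq Finset.univ a F, if_pos (Finset.mem_univ a)]
    ring

lemma sum_count_row (l : List (V × V)) (w : V) :
    ∑ v' : V, ((l.count (w, v') : ℕ) : ℝ) = (((l.map Prod.fst).count w : ℕ) : ℝ) := by
  induction l with
  | nil => simp
  | cons a l ih =>
    obtain ⟨a1, a2⟩ := a
    simp only [List.count_cons, List.map_cons]
    push_cast
    rw [Finset.sum_add_distrib, ih]
    congr 1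
    simp only [beq_iff_eq, Prod.mk.injEq]
    by_cases h : a1 = w
    · simp only [h, true_and, if_true]
      rw [Finset.sum_ite_eq Finset.univ a2 (fun _ => (1:ℝ)), if_pos (Finset.mem_univ a2)]
    · simp [h]


lemma sum_count_col (l : List (V × V)) (w : V) :
    ∑ u' : V, ((l.count (u', w) : ℕ) : ℝ) = (((l.map Prod.snd).count w : ℕ) : ℝ) := by
  induction l with
  | nil => simp
  | cons a l ih =>
    obtain ⟨a1, a2⟩ := a
    simp only [List.count_cons, List.map_cons]
    push_cast
    rw [Finset.sum_add_distrib, ih]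
    congr 1
    simp only [beq_iff_eq, Prod.mk.injEq]
    by_cases h : a2 = w
    · simp only [h, and_true, if_true]
      rw [Finset.sum_ite_eq Finset.univ a1 (fun _ => (1:ℝ)), if_pos (Finset.mem_univ a1)]
    · simp [h]

lemma cyclical_monotonicity {m₁ m₂ : V → ℝ} {A : V × V → ℝ}
    (hA : IsCouplingW A m₁ m₂) (hm₁ : ∀ u, m₁ u ≤ 1)
    (hopt : ∀ B, IsCouplingW B m₁ m₂ → cost G A ≤ cost G B)
    (u v : V) (Q : List (V × V)) (hmem : ∀ p ∈ (u, v) :: Q, 0 < A p) :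
    (((u, v) :: Q).map (dd G)).sum ≤ ((addList u Q v).map (dd G)).sum := by
  set L : List (V × V) := (u, v) :: Q with hL
  set R : List (V × V) := addList u Q v with hR
  have hfst : R.map Prod.fst = L.map Prod.fst := by
    rw [hR, addList_map_fst]; rfl
  have hsndperm : (R.map Prod.snd).Perm (L.map Prod.snd) := by
    rw [hR, addList_map_snd]
    exact List.perm_append_singleton v (Q.map Prod.snd)
  have huvL : (u, v) ∈ L.toFinset := by simp [hL]
  set δ : ℝ := L.toFinset.inf' ⟨(u, v), huvL⟩ A with hδ
  have hδpos : 0 < δ := by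
    rw [hδ]
    refine (Finset.lt_inf'_iff _).2 ?_
    intro p hp
    exact hmem p (List.mem_toFinset.1 hp)
  have hδle : ∀ p ∈ L, δ ≤ A p := fun p hp =>
    Finset.inf'_le _ (List.mem_toFinset.2 hp)
  have hlen : (0:ℝ) < (L.length : ℝ) := by
    rw [hL, List.length_cons]; positivity
  set ε : ℝ := δ / (L.length : ℝ) with hε
  have hεpos : 0 < ε := div_pos hδpos hlen
  set B : V × V → ℝ := fun p => A p + ε * ((R.count p : ℝ) - (L.count p : ℝ)) with hB
  have hBrow : ∀ w : V, ∑ v' : V, B (w, v') = m₁ w := by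
    intro w
    have : ∑ v' : V, B (w, v')
        = (∑ v' : V, A (w, v')) + ε * ((∑ v' : V, ((R.count (w, v') : ℕ) : ℝ))
          - ∑ v' : V, ((L.count (w, v') : ℕ) : ℝ)) := by
      simp only [hB]
      rw [Finset.sum_add_distrib, ← Finset.mul_sum, Finset.sum_sub_distrib]
    rw [this, sum_count_row, sum_count_row, hfst, sub_self, mul_zero, add_zero, hA.2.1]
  have hBcol : ∀ w : V, ∑ u' : V, B (u', w) = m₂ w := by
    intro w
    have : ∑ u' : V, B (u', w)
        = (∑ u' : V, A (u', w)) + ε * ((∑ u' : V, ((R.count (u', w) : ℕ) : ℝ))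
          - ∑ u' : V, ((L.count (u', w) : ℕ) : ℝ)) := by
      simp only [hB]
      rw [Finset.sum_add_distrib, ← Finset.mul_sum, Finset.sum_sub_distrib]
    rw [this, sum_count_col, sum_count_col, hsndperm.count_eq, sub_self, mul_zero, add_zero,
      hA.2.2]
  have hBnonneg : ∀ p : V × V, 0 ≤ B p := by
    intro p
    rw [hB]
    simp only
    by_cases hp : p ∈ L
    · have h1 : (L.count p : ℝ) ≤ (L.length : ℝ) := by
        exact_mod_cast List.count_le_length
      have h2 : ε * (L.count p : ℝ) ≤ ε * (L.length : ℝ) :=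
        mul_le_mul_of_nonneg_left h1 hεpos.le
      have h3 : ε * (L.length : ℝ) = δ := by
        rw [hε]; field_simp
      have h4 : δ ≤ A p := hδle p hp
      have h5 : 0 ≤ ε * (R.count p : ℝ) := by positivity
      nlinarith
    · have : L.count p = 0 := List.count_eq_zero.2 hp
      rw [this]
      have : 0 ≤ ε * (R.count p : ℝ) := by positivity
      push_cast
      nlinarith [hmem (u, v) (by simp [hL] : (u,v) ∈ (u,v) :: Q), (hA.1 p).1]
  have hBcoupling : IsCouplingW B m₁ m₂ :=
    ⟨fun p => ⟨hBnonneg p, entry_le_one hBnonneg hBrow hm₁ p⟩, hBrow, hBcol⟩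
  have hcost : cost G B = cost G A + ε * (((R.map (dd G)).sum) - ((L.map (dd G)).sum)) := by
    simp only [cost, hB]
    have hstep : ∀ p : V × V,
        (A p + ε * ((R.count p : ℝ) - (L.count p : ℝ))) * (G.dist p.1 p.2 : ℝ)
        = A p * (G.dist p.1 p.2 : ℝ)
          + ε * ((R.count p : ℝ) * dd G p - (L.count p : ℝ) * dd G p) := by
      intro p; rw [dd]; ring
    rw [Finset.sum_congr rfl fun p _ => hstep p, Finset.sum_add_distrib, ← Finset.mul_sum,
      Finset.sum_sub_distrib, sum_count_mul, sum_count_mul]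
  have hle := hopt B hBcoupling
  rw [hcost] at hle
  by_contra hcon
  push_neg at hcon
  have : ε * (((R.map (dd G)).sum) - ((L.map (dd G)).sum)) < 0 :=
    mul_neg_of_pos_of_neg hεpos (by linarith)
  linarith


noncomputable def chainVal (G : SimpleGraph V) (x₀ : V) : V → List (V × V) → ℝ
  | z, [] => (G.dist z x₀ : ℝ)
  | z, (a, b) :: L => (G.dist z b : ℝ) - (G.dist a b : ℝ) + chainVal G x₀ a L

noncomputable def FB (G : SimpleGraph V) [Fintype V] (S : Finset (V × V)) (hS : S.Nonempty)
    (x₀ : V) : ℕ → V → ℝ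
  | 0, z => (G.dist z x₀ : ℝ)
  | (k + 1), z => min (FB G S hS x₀ k z)
      (S.inf' hS fun p => (G.dist z p.2 : ℝ) - (G.dist p.1 p.2 : ℝ) + FB G S hS x₀ k p.1)

variable {S : Finset (V × V)} {hS : S.Nonempty} {x₀ : V}

lemma FB_antitone (k j : ℕ) (hkj : j ≤ k) (z : V) :
    FB G S hS x₀ k z ≤ FB G S hS x₀ j z := by
  induction k with
  | zero => rw [Nat.le_zero.1 hkj]
  | succ k ih =>
    rcases Nat.lt_or_ge j (k+1) with h | h
    · exact le_trans (min_le_left _ _) (ih (Nat.lt_succ_iff.1 h))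
    · rw [le_antisymm hkj h]

lemma FB_le_chainVal : ∀ (k : ℕ) (L : List (V × V)), (∀ p ∈ L, p ∈ S) → L.length ≤ k →
    ∀ z, FB G S hS x₀ k z ≤ chainVal G x₀ z L := by
  intro k
  induction k with
  | zero =>
    intro L hmem hlen z
    rw [List.length_eq_zero_iff.1 (Nat.le_zero.1 hlen)]
    exact le_refl _
  | succ k ih =>
    intro L hmem hlen z
    match L with
    | [] => exact le_of_le_of_eq (FB_antitone (k+1) 0 (Nat.zero_le _) z) rfl
    | (a, b) :: L' =>
      have haS : (a, b) ∈ S := hmem _ List.mem_cons_self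
      calc FB G S hS x₀ (k+1) z
          ≤ S.inf' hS fun p => (G.dist z p.2 : ℝ) - (G.dist p.1 p.2 : ℝ) + FB G S hS x₀ k p.1 :=
            min_le_right _ _
        _ ≤ (G.dist z b : ℝ) - (G.dist a b : ℝ) + FB G S hS x₀ k a := Finset.inf'_le _ haS
        _ ≤ (G.dist z b : ℝ) - (G.dist a b : ℝ) + chainVal G x₀ a L' := by
            have := ih L' (fun p hp => hmem p (List.mem_cons_of_mem _ hp))
              (Nat.succ_le_succ_iff.1 (by simpa using hlen)) a
            linarith
        _ = chainVal G x₀ z ((a, b) :: L') := rfl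

lemma FB_exists_chain : ∀ (k : ℕ) (z : V), ∃ L : List (V × V),
    (∀ p ∈ L, p ∈ S) ∧ L.length ≤ k ∧ chainVal G x₀ z L = FB G S hS x₀ k z := by
  intro k
  induction k with
  | zero => exact fun z => ⟨[], by simp, by simp, rfl⟩
  | succ k ih =>
    intro z
    rcases le_total (FB G S hS x₀ k z)
      (S.inf' hS fun p => (G.dist z p.2 : ℝ) - (G.dist p.1 p.2 : ℝ) + FB G S hS x₀ k p.1)
      with h | h
    · obtain ⟨L, h1, h2, h3⟩ := ih z
      exact ⟨L, h1, h2.trans (Nat.le_succ k), h3.trans (min_eq_left h).symm⟩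
    · obtain ⟨p, hpS, hpeq⟩ := Finset.exists_mem_eq_inf' hS
        (fun p => (G.dist z p.2 : ℝ) - (G.dist p.1 p.2 : ℝ) + FB G S hS x₀ k p.1)
      obtain ⟨a, b⟩ := p
      obtain ⟨L', h1, h2, h3⟩ := ih a
      refine ⟨(a, b) :: L', ?_, ?_, ?_⟩
      · intro q hq
        rcases List.mem_cons.1 hq with h | h
        · rwa [h]
        · exact h1 q h
      · simpa using Nat.succ_le_succ h2
      · show (G.dist z b : ℝ) - (G.dist a b : ℝ) + chainVal G x₀ a L' = _
        have hFB : FB G S hS x₀ (k+1) z = min (FB G S hS x₀ k z)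
            (S.inf' hS fun p => (G.dist z p.2 : ℝ) - (G.dist p.1 p.2 : ℝ)
              + FB G S hS x₀ k p.1) := rfl
        rw [h3, hFB, min_eq_right h, hpeq]

lemma FB_lip (hconn : G.Connected) : ∀ (k : ℕ) (a b : V),
    FB G S hS x₀ k a ≤ FB G S hS x₀ k b + (G.dist a b : ℝ) := by
  intro k
  induction k with
  | zero =>
    intro a b
    have := dist_tri hconn a b x₀
    show (G.dist a x₀ : ℝ) ≤ (G.dist b x₀ : ℝ) + (G.dist a b : ℝ)
    linarith
  | succ k ih =>
    intro a b
    have h1 : FB G S hS x₀ (k+1) a ≤ FB G S hS x₀ k b + (G.dist a b : ℝ) :=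
      le_trans (min_le_left _ _) (ih a b)
    have h2 : FB G S hS x₀ (k+1) a ≤
        (S.inf' hS fun p => (G.dist b p.2 : ℝ) - (G.dist p.1 p.2 : ℝ) + FB G S hS x₀ k p.1)
          + (G.dist a b : ℝ) := by
      obtain ⟨p, hpS, hpeq⟩ := Finset.exists_mem_eq_inf' hS
        (fun p => (G.dist b p.2 : ℝ) - (G.dist p.1 p.2 : ℝ) + FB G S hS x₀ k p.1)
      have h3 : FB G S hS x₀ (k+1) a ≤
          (G.dist a p.2 : ℝ) - (G.dist p.1 p.2 : ℝ) + FB G S hS x₀ k p.1 :=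
        le_trans (min_le_right _ _) (Finset.inf'_le _ hpS)
      have h4 := dist_tri hconn a b p.2
      rw [hpeq]
      linarith
    calc FB G S hS x₀ (k+1) a
        ≤ min (FB G S hS x₀ k b + (G.dist a b : ℝ))
          ((S.inf' hS fun p => (G.dist b p.2 : ℝ) - (G.dist p.1 p.2 : ℝ) + FB G S hS x₀ k p.1)
            + (G.dist a b : ℝ)) := le_min h1 h2
      _ = FB G S hS x₀ (k+1) b + (G.dist a b : ℝ) := min_add_add_right _ _ _

lemma chainVal_append (u v : V) (Q : List (V × V)) (R : List (V × V)) : ∀ z : V,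
    chainVal G x₀ z (Q ++ ((u, v) :: R)) =
      ((addList z Q v).map (dd G)).sum - ((((u, v) :: Q)).map (dd G)).sum
        + chainVal G x₀ u R := by
  induction Q with
  | nil =>
    intro z
    show (G.dist z v : ℝ) - (G.dist u v : ℝ) + chainVal G x₀ u R = _
    simp [addList, dd]
  | cons q Q ih =>
    intro z
    obtain ⟨a, b⟩ := q
    show (G.dist z b : ℝ) - (G.dist a b : ℝ) + chainVal G x₀ a (Q ++ ((u, v) :: R)) = _
    rw [ih a]
    simp only [addList, List.map_cons, List.sum_cons, dd]
    ring

lemma exists_dup_split {β : Type*} : ∀ (L : List β), ¬L.Nodup →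
    ∃ (P : List β) (x : β) (Q R : List β), L = P ++ (x :: (Q ++ (x :: R))) := by
  intro L
  induction L with
  | nil => intro h; exact absurd List.nodup_nil h
  | cons a L' ih =>
    intro h
    by_cases ha : a ∈ L'
    · obtain ⟨s, t, hst⟩ := List.append_of_mem ha
      exact ⟨[], a, s, t, by rw [hst]; rfl⟩
    · have : ¬L'.Nodup := fun hn => h (List.nodup_cons.2 ⟨ha, hn⟩)
      obtain ⟨P, x, Q, R, hPQR⟩ := ih this
      exact ⟨a :: P, x, Q, R, by rw [hPQR]; rfl⟩


lemma chainVal_removal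
    (hCM : ∀ (u v : V) (Q : List (V × V)), (u, v) ∈ S → (∀ q ∈ Q, q ∈ S) →
      (((u, v) :: Q).map (dd G)).sum ≤ ((addList u Q v).map (dd G)).sum)
    (p : V × V) (Q : List (V × V)) (hp : p ∈ S) (hQ : ∀ q ∈ Q, q ∈ S) :
    ∀ (P : List (V × V)) (R : List (V × V)) (z : V),
      chainVal G x₀ z (P ++ (p :: (Q ++ (p :: R)))) ≥ chainVal G x₀ z (P ++ (p :: R)) := by
  intro P
  induction P with
  | nil =>
    intro R z
    obtain ⟨u, v⟩ := p
    show chainVal G x₀ z ((u, v) :: (Q ++ ((u, v) :: R))) ≥ chainVal G x₀ z ((u, v) :: R)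
    have h1 : chainVal G x₀ z ((u, v) :: (Q ++ ((u, v) :: R)))
        = (G.dist z v : ℝ) - (G.dist u v : ℝ) + chainVal G x₀ u (Q ++ ((u, v) :: R)) := rfl
    have h2 : chainVal G x₀ z ((u, v) :: R)
        = (G.dist z v : ℝ) - (G.dist u v : ℝ) + chainVal G x₀ u R := rfl
    rw [h1, h2, chainVal_append u v Q R u]
    have := hCM u v Q hp hQ
    linarith
  | cons q P' ih =>
    intro R z
    obtain ⟨a, b⟩ := q
    show (G.dist z b : ℝ) - (G.dist a b : ℝ) + chainVal G x₀ a (P' ++ (p :: (Q ++ (p :: R))))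
      ≥ (G.dist z b : ℝ) - (G.dist a b : ℝ) + chainVal G x₀ a (P' ++ (p :: R))
    have := ih R a
    linarith

lemma FB_le_chainVal_all
    (hCM : ∀ (u v : V) (Q : List (V × V)), (u, v) ∈ S → (∀ q ∈ Q, q ∈ S) →
      (((u, v) :: Q).map (dd G)).sum ≤ ((addList u Q v).map (dd G)).sum) :
    ∀ (fuel : ℕ) (L : List (V × V)), L.length ≤ fuel → (∀ p ∈ L, p ∈ S) → ∀ z,
      FB G S hS x₀ (Fintype.card (V × V)) z ≤ chainVal G x₀ z L := by
  intro fuel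
  induction fuel with
  | zero =>
    intro L hlen hmem z
    exact FB_le_chainVal _ L hmem (hlen.trans (Nat.zero_le _)) z
  | succ fuel ih =>
    intro L hlen hmem z
    rcases Nat.lt_or_ge (Fintype.card (V × V)) L.length with hbig | hsmall
    · have hnd : ¬L.Nodup := fun hnd => absurd (hnd.length_le_card) (Nat.not_le.2 hbig)
      obtain ⟨P, p, Q, R, hsplit⟩ := exists_dup_split L hnd
      have hmem' : ∀ q ∈ P ++ (p :: (Q ++ (p :: R))), q ∈ S := by rw [← hsplit]; exact hmem
      have hpS : p ∈ S := hmem' p (by simp)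
      have hQS : ∀ q ∈ Q, q ∈ S := fun q hq => hmem' q (by simp [hq])
      have hPR : ∀ q ∈ P ++ (p :: R), q ∈ S := by
        intro q hq
        rcases List.mem_append.1 hq with h | h
        · exact hmem' q (List.mem_append_left _ h)
        · rcases List.mem_cons.1 h with h' | h'
          · rw [h']; exact hpS
          · exact hmem' q (by simp [h'])
      have hlen' : (P ++ (p :: R)).length ≤ fuel := by
        have e1 : L.length = P.length + Q.length + R.length + 2 := by
          rw [hsplit]; simp; omega
        have e2 : (P ++ (p :: R)).length = P.length + R.length + 1 := by simp; omega
        omega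
      have h1 := ih (P ++ (p :: R)) hlen' hPR z
      have h2 := chainVal_removal (x₀ := x₀) hCM p Q hpS hQS P R z
      rw [← hsplit] at h2
      linarith
    · exact FB_le_chainVal _ L hmem hsmall z

lemma exists_potential (hconn : G.Connected) (S : Finset (V × V)) (hS : S.Nonempty)
    (hCM : ∀ (u v : V) (Q : List (V × V)), (u, v) ∈ S → (∀ q ∈ Q, q ∈ S) →
      (((u, v) :: Q).map (dd G)).sum ≤ ((addList u Q v).map (dd G)).sum) :
    ∃ f : V → ℝ, Lip1 G f ∧ ∀ p ∈ S, f p.1 - f p.2 = dd G p := by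
  have hS' := hS
  obtain ⟨p₀, hp₀⟩ := hS'
  set x₀ : V := p₀.1
  set N : ℕ := Fintype.card (V × V) with hN
  refine ⟨FB G S hS x₀ N, ?_, ?_⟩
  · intro a b
    have h1 := FB_lip (hS := hS) (x₀ := x₀) hconn N a b
    have h2 := FB_lip (hS := hS) (x₀ := x₀) hconn N b a
    rw [abs_sub_le_iff]
    constructor
    · linarith
    · rw [dist_comm'] at h2; linarith
  · rintro ⟨u, v⟩ hpS
    have hle : FB G S hS x₀ N u - FB G S hS x₀ N v ≤ (G.dist u v : ℝ) := by
      have := FB_lip (hS := hS) (x₀ := x₀) hconn N u v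
      linarith
    have hge : FB G S hS x₀ N v ≤ FB G S hS x₀ N u - (G.dist u v : ℝ) := by
      have hstep : FB G S hS x₀ (N + 1) v
          ≤ (G.dist v v : ℝ) - (G.dist u v : ℝ) + FB G S hS x₀ N u := by
        exact le_trans (min_le_right _ _) (Finset.inf'_le _ hpS)
      have hd0 : (G.dist v v : ℝ) = 0 := by
        rw [SimpleGraph.dist_self]; norm_num
      obtain ⟨L, hL1, hL2, hL3⟩ := FB_exists_chain (hS := hS) (x₀ := x₀) (N + 1) v
      have hmain := FB_le_chainVal_all (hS := hS) (x₀ := x₀) hCM L.length L (le_refl _) hL1 v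
      rw [hL3] at hmain
      rw [hd0] at hstep
      calc FB G S hS x₀ N v ≤ FB G S hS x₀ (N + 1) v := hmain
        _ ≤ FB G S hS x₀ N u - (G.dist u v : ℝ) := by linarith
    show FB G S hS x₀ N u - FB G S hS x₀ N v = dd G (u, v)
    rw [dd]
    have := hge
    linarith

lemma strong_duality (hconn : G.Connected) {m₁ m₂ : V → ℝ} {A : V × V → ℝ}
    (hA : IsCouplingW A m₁ m₂) (hm₁ : ∀ u, m₁ u ≤ 1)
    (hopt : ∀ B, IsCouplingW B m₁ m₂ → cost G A ≤ cost G B)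
    (hApos : ∃ p, A p ≠ 0) :
    ∃ f : V → ℝ, Lip1 G f ∧ (∑ v, f v * m₁ v) - (∑ v, f v * m₂ v) = cost G A := by
  set S : Finset (V × V) := Finset.univ.filter (fun p => A p ≠ 0) with hSdef
  have hS : S.Nonempty := by
    obtain ⟨p, hp⟩ := hApos
    exact ⟨p, by simp [hSdef, hp]⟩
  have hposS : ∀ p ∈ S, 0 < A p := by
    intro p hp
    have h1 : A p ≠ 0 := by
      have := Finset.mem_filter.1 hp
      exact this.2
    exact lt_of_le_of_ne (hA.1 p).1 (Ne.symm h1)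
  have hCM : ∀ (u v : V) (Q : List (V × V)), (u, v) ∈ S → (∀ q ∈ Q, q ∈ S) →
      (((u, v) :: Q).map (dd G)).sum ≤ ((addList u Q v).map (dd G)).sum := by
    intro u v Q huv hQ
    apply cyclical_monotonicity hA hm₁ hopt
    intro p hp
    rcases List.mem_cons.1 hp with h | h
    · rw [h]; exact hposS _ huv
    · exact hposS _ (hQ _ h)
  obtain ⟨f, hf, hfS⟩ := exists_potential hconn S hS hCM
  refine ⟨f, hf, ?_⟩
  rw [← sum_fst_coupling hA f, ← sum_snd_coupling hA f, ← Finset.sum_sub_distrib, cost]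
  refine Finset.sum_congr rfl fun p _ => ?_
  by_cases hp : A p = 0
  · rw [hp]; ring
  · have hpS : p ∈ S := by simp [hSdef, hp]
    have heq := hfS p hpS
    rw [dd] at heq
    calc f p.1 * A p - f p.2 * A p = (f p.1 - f p.2) * A p := by ring
      _ = (G.dist p.1 p.2 : ℝ) * A p := by rw [heq]
      _ = A p * (G.dist p.1 p.2 : ℝ) := mul_comm _ _


lemma lap_diff (f g : V → ℝ) (u : V) :
    lap G g u - lap G f u
      = (1 / (deg G u : ℝ)) * ∑ v ∈ nbr G u, ((g v - f v) - (g u - f u)) := by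
  rw [lap_eq, lap_eq, ← mul_sub, ← Finset.sum_sub_distrib]
  congr 1
  exact Finset.sum_congr rfl fun v _ => by ring

lemma avg_le (hconn : G.Connected) [Nontrivial V] {c : ℝ} {F : V → ℝ} (u : V)
    (hbd : ∀ v ∈ nbr G u, F v ≤ c) :
    (1 / (deg G u : ℝ)) * ∑ v ∈ nbr G u, F v ≤ c := by
  have hd := deg_pos' hconn u
  have h1 : ∑ v ∈ nbr G u, F v ≤ (deg G u : ℝ) * c := by
    calc ∑ v ∈ nbr G u, F v ≤ ∑ _v ∈ nbr G u, c := Finset.sum_le_sum hbd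
      _ = (deg G u : ℝ) * c := by rw [Finset.sum_const, nsmul_eq_mul, deg_eq_card]
  calc (1 / (deg G u : ℝ)) * ∑ v ∈ nbr G u, F v
      ≤ (1 / (deg G u : ℝ)) * ((deg G u : ℝ) * c) := by
        apply mul_le_mul_of_nonneg_left h1 (by positivity)
    _ = c := by field_simp

lemma le_avg (hconn : G.Connected) [Nontrivial V] {c : ℝ} {F : V → ℝ} (u : V)
    (hbd : ∀ v ∈ nbr G u, c ≤ F v) :
    c ≤ (1 / (deg G u : ℝ)) * ∑ v ∈ nbr G u, F v := by
  have h := avg_le hconn (c := -c) (F := fun v => -(F v)) u (fun v hv => by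
    have := hbd v hv; linarith)
  rw [Finset.sum_neg_distrib] at h
  linarith [h]

lemma lap_neg (g : V → ℝ) (u : V) : lap G (fun v => -(g v)) u = -(lap G g u) := by
  rw [lap_eq, lap_eq]
  rw [show ∑ v ∈ nbr G u, (-g v - -g u) = -∑ v ∈ nbr G u, (g v - g u) by
    rw [← Finset.sum_neg_distrib]; exact Finset.sum_congr rfl fun v _ => by ring]
  ring

lemma dist_fun_lip (hconn : G.Connected) (x : V) : Lip1 G (fun v => (G.dist x v : ℝ)) := by
  intro a b
  have h1 := dist_tri hconn x a b
  have h2 := dist_tri hconn x b a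
  rw [dist_comm' b a] at h2
  rw [abs_sub_le_iff]
  constructor <;> [skip; skip] <;> simp only [] <;> linarith

lemma kappa_set_nonempty (hconn : G.Connected) {x y : V} (hne : x ≠ y) :
    {k : ℝ | ∃ f : V → ℝ, Lip1 G f ∧ grad G f y x = 1 ∧ k = grad G (lap G f) x y}.Nonempty := by
  have hDpos : (0:ℝ) < (G.dist y x : ℝ) := by
    exact_mod_cast hconn.pos_dist_of_ne (Ne.symm hne)
  refine ⟨grad G (lap G (fun v => (G.dist x v : ℝ))) x y,
    fun v => (G.dist x v : ℝ), dist_fun_lip hconn x, ?_, rfl⟩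
  rw [grad]
  rw [show G.dist x y = G.dist y x from SimpleGraph.dist_comm]
  rw [show G.dist x x = 0 from SimpleGraph.dist_self]
  push_cast
  rw [sub_zero, div_self (ne_of_gt hDpos)]


set_option maxHeartbeats 2000000 in
lemma kappaAlpha_div_eq (hconn : G.Connected) {x y : V} (hne : x ≠ y) {α : ℝ}
    (hhalf : 1 / 2 ≤ α) (hlt : α < 1) :
    kappaAlpha G α x y / (1 - α) = kappa G x y := by
  have hnt : Nontrivial V := ⟨x, y, hne⟩
  set D : ℝ := (G.dist x y : ℝ) with hD
  have hDpos : 0 < D := by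
    rw [hD]; exact_mod_cast hconn.pos_dist_of_ne hne
  have hdyx : (G.dist y x : ℝ) = D := by rw [hD, dist_comm']
  have hα0 : (0:ℝ) ≤ α := by linarith
  have h1α : 0 < 1 - α := by linarith
  have hmA0 : ∀ v, 0 ≤ (mAlpha G α x) v := mAlpha_nonneg hα0 hlt.le x
  have hmB0 : ∀ v, 0 ≤ (mAlpha G α y) v := mAlpha_nonneg hα0 hlt.le y
  have hs₁ : ∑ v, (mAlpha G α x) v = 1 := sum_mAlpha hconn α x
  have hs₂ : ∑ v, (mAlpha G α y) v = 1 := sum_mAlpha hconn α y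
  have hmAle : ∀ u, (mAlpha G α x) u ≤ 1 := m_le_one hmA0 hs₁
  have hex : ∃ A : V × V → ℝ, IsCouplingW A (mAlpha G α x) (mAlpha G α y) :=
    ⟨_, prod_coupling hmA0 hmB0 hs₁ hs₂⟩
  obtain ⟨A, hA, hopt⟩ := exists_optimal_coupling hex
  have hWA : W G (mAlpha G α x) (mAlpha G α y) = cost G A := W_eq_cost hA hopt
  have hApos : ∃ p, A p ≠ 0 := by
    by_contra hcon
    push_neg at hcon
    have h0 : (mAlpha G α x) x = 0 := by
      rw [← hA.2.1 x]
      exact Finset.sum_eq_zero fun v _ => hcon (x, v)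
    have h1 : (mAlpha G α x) x = α := by rw [mAlpha_eq, if_pos rfl]
    have : (0:ℝ) < α := by linarith
    rw [h1] at h0; linarith
  obtain ⟨f, hf, hfcost⟩ := strong_duality hconn hA hmAle hopt hApos
  have hsum : ∀ (g : V → ℝ) (u : V),
      ∑ v, g v * mAlpha G α u v = g u + (1 - α) * lap G g u :=
    fun g u => sum_mul_mAlpha hconn α u g
  have hPhiF : (f x + (1 - α) * lap G f x) - (f y + (1 - α) * lap G f y) = cost G A := by
    rw [← hsum f x, ← hsum f y]; exact hfcost
  -- the modified potential g with gradient exactly 1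
  set t : ℝ := D - (f x - f y) with ht
  have htnn : 0 ≤ t := by
    have := hf x y
    rw [abs_sub_le_iff] at this
    rw [ht, hD]; linarith [this.1]
  set h' : V → ℝ := fun z => f y + D - (G.dist x z : ℝ) with hh'
  have hh'lip : Lip1 G h' := by
    intro a b
    have hab := dist_fun_lip hconn x a b
    rw [abs_sub_comm] at hab
    have : h' a - h' b = ((G.dist x b : ℝ)) - ((G.dist x a : ℝ)) := by
      show (f y + D - (G.dist x a : ℝ)) - (f y + D - (G.dist x b : ℝ)) = _
      ring
    rw [this]
    exact hab
  set g : V → ℝ := fun z => max (f z) (h' z) with hg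
  have hglip : Lip1 G g := by
    intro a b
    exact le_trans (abs_max_sub_max_le_max _ _ _ _) (max_le (hf a b) (hh'lip a b))
  have hdxx : (G.dist x x : ℝ) = 0 := by rw [SimpleGraph.dist_self]; norm_num
  have hh'y : h' y = f y := by
    show f y + D - (G.dist x y : ℝ) = f y
    rw [← hD]; ring
  have hh'x : h' x = f y + D := by
    show f y + D - (G.dist x x : ℝ) = f y + D
    rw [hdxx]; ring
  have hgy : g y = f y := by
    show max (f y) (h' y) = f y
    rw [hh'y, max_self]
  have hgx : g x = f y + D := by
    show max (f x) (h' x) = f y + D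
    rw [hh'x]
    exact max_eq_right (by linarith)
  have hgf : ∀ z, f z ≤ g z := fun z => le_max_left _ _
  have hgt : ∀ z, g z ≤ f z + t := by
    intro z
    have hz := hf x z
    rw [abs_sub_le_iff] at hz
    have hz1 := hz.1
    have hh'z : h' z = f y + D - (G.dist x z : ℝ) := rfl
    show max (f z) (h' z) ≤ f z + t
    apply max_le
    · linarith
    · rw [hh'z]; linarith
  have hgxfx : g x - f x = t := by rw [hgx, ht]; ring
  have hgyfy : g y - f y = 0 := by rw [hgy]; ring
  have hlapx : -t ≤ lap G g x - lap G f x := by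
    rw [lap_diff]
    apply le_avg hconn
    intro v _
    have h1 := hgf v
    linarith
  have hlapy : lap G g y - lap G f y ≤ t := by
    rw [lap_diff]
    apply avg_le hconn
    intro v _
    have h1 := hgt v
    linarith
  have hPhiG_le : (g x + (1 - α) * lap G g x) - (g y + (1 - α) * lap G g y) ≤ cost G A := by
    have := easy_dual hconn hA hglip
    rwa [hsum g x, hsum g y] at this
  have hPhiG_ge : cost G A ≤ (g x + (1 - α) * lap G g x) - (g y + (1 - α) * lap G g y) := by
    rw [← hPhiF]
    nlinarith [hlapx, hlapy, h1α, htnn, hhalf, hgxfx, hgyfy]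
  have hPhiG : (g x + (1 - α) * lap G g x) - (g y + (1 - α) * lap G g y) = cost G A :=
    le_antisymm hPhiG_le hPhiG_ge
  have hgxy : g x - g y = D := by rw [hgx, hgy]; ring
  have hWval : W G (mAlpha G α x) (mAlpha G α y) = D + (1 - α) * (lap G g x - lap G g y) := by
    rw [hWA, ← hPhiG]
    have : (g x + (1 - α) * lap G g x) - (g y + (1 - α) * lap G g y)
        = (g x - g y) + (1 - α) * (lap G g x - lap G g y) := by ring
    rw [this, hgxy]
  have hkdef : kappaAlpha G α x y = 1 - W G (mAlpha G α x) (mAlpha G α y) / D := rfl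
  have hkA : kappaAlpha G α x y / (1 - α) = (lap G g y - lap G g x) / D := by
    rw [hkdef, hWval]
    field_simp
    ring
  set kset : Set ℝ := {k : ℝ | ∃ f : V → ℝ, Lip1 G f ∧ grad G f y x = 1 ∧
      k = grad G (lap G f) x y} with hkset
  have hkapdef : kappa G x y = sInf kset := rfl
  set k₀ : ℝ := (lap G g y - lap G g x) / D with hk₀
  have hmem : k₀ ∈ kset := by
    refine ⟨fun v => -(g v), ?_, ?_, ?_⟩
    · intro a b
      have hab := hglip a b
      rw [abs_sub_comm] at hab
      have : (fun v => -(g v)) a - (fun v => -(g v)) b = g b - g a := by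
        show -(g a) - (-(g b)) = g b - g a; ring
      rw [this]
      exact hab
    · show ((fun v => -(g v)) y - (fun v => -(g v)) x) / (G.dist y x : ℝ) = 1
      have : (fun v => -(g v)) y - (fun v => -(g v)) x = g x - g y := by
        show -(g y) - (-(g x)) = g x - g y; ring
      rw [this, hgxy, hdyx, div_self (ne_of_gt hDpos)]
    · show k₀ = (lap G (fun v => -(g v)) x - lap G (fun v => -(g v)) y) / (G.dist x y : ℝ)
      rw [lap_neg, lap_neg, ← hD, hk₀]
      congr 1
      ring
  have hbdd : BddBelow kset :=
    ⟨-2, fun k hk => grad_lap_mem_bdd hconn hne k hk⟩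
  have hle_all : ∀ k ∈ kset, kappaAlpha G α x y / (1 - α) ≤ k := by
    rintro k ⟨f'', hf''lip, hf''grad, rfl⟩
    have hg''lip : Lip1 G (fun v => -(f'' v)) := by
      intro a b
      have hab := hf''lip a b
      rw [abs_sub_comm] at hab
      have : (fun v => -(f'' v)) a - (fun v => -(f'' v)) b = f'' b - f'' a := by
        show -(f'' a) - (-(f'' b)) = f'' b - f'' a; ring
      rw [this]
      exact hab
    have hgrad' : f'' y - f'' x = D := by
      have : (f'' y - f'' x) / (G.dist y x : ℝ) = 1 := hf''grad
      rw [hdyx] at this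
      field_simp at this
      linarith
    have hed := W_ge hconn hex hg''lip
    rw [hsum _ x, hsum _ y] at hed
    rw [lap_neg, lap_neg] at hed
    have hed' : (-(f'' x) + (1 - α) * -(lap G f'' x))
        - (-(f'' y) + (1 - α) * -(lap G f'' y)) ≤ W G (mAlpha G α x) (mAlpha G α y) := hed
    have hWlb : D - (1 - α) * (lap G f'' x - lap G f'' y) ≤ W G (mAlpha G α x) (mAlpha G α y) := by
      nlinarith [hed', hgrad']
    have hgdef : grad G (lap G f'') x y = (lap G f'' x - lap G f'' y) / D := by
      show (lap G f'' x - lap G f'' y) / (G.dist x y : ℝ) = _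
      rw [← hD]
    rw [hkdef, hgdef]
    rw [div_le_div_iff₀ h1α hDpos]
    have h2 : W G (mAlpha G α x) (mAlpha G α y) / D ≥ (D - (1 - α) * (lap G f'' x - lap G f'' y)) / D :=
      div_le_div_of_nonneg_right hWlb hDpos.le
    have h3 : (D - (1 - α) * (lap G f'' x - lap G f'' y)) / D
        = 1 - (1 - α) * (lap G f'' x - lap G f'' y) / D := by
      field_simp
    rw [h3] at h2
    have h4 : 1 - W G (mAlpha G α x) (mAlpha G α y) / D ≤ (1 - α) * (lap G f'' x - lap G f'' y) / D := by linarith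
    calc (1 - W G (mAlpha G α x) (mAlpha G α y) / D) * D ≤ ((1 - α) * (lap G f'' x - lap G f'' y) / D) * D := by
          exact mul_le_mul_of_nonneg_right h4 hDpos.le
      _ = (lap G f'' x - lap G f'' y) * (1 - α) := by field_simp
  rw [hkapdef]
  apply le_antisymm
  · exact le_csInf ⟨k₀, hmem⟩ hle_all
  · rw [hkA]
    exact csInf_le hbdd hmem

end MW
end LLY
open LLY in
/-- **Münch–Wojciechowski.** For a finite connected simple graph `G` and
distinct vertices `x ≠ y`, `κ_α(x,y)/(1-α)` converges, as `α → 1⁻` (within `[0,1)`), to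
the limit-free Laplacian formulation of the Lin–Lu–Yau curvature `κ(x,y)`. -/
theorem lly_limit_eq_laplacian_formulation {V : Type*} [Fintype V] (G : SimpleGraph V)
    (hconn : G.Connected) (x y : V) (hne : x ≠ y) :
    Filter.Tendsto (fun α : ℝ => kappaAlpha G α x y / (1 - α))
      (nhdsWithin 1 (Set.Ico 0 1)) (nhds (kappa G x y)) := by
  have h1 : ∀ᶠ (α : ℝ) in nhdsWithin 1 (Set.Ico 0 1), (1/2 : ℝ) < α :=
    Filter.Eventually.filter_mono nhdsWithin_le_nhds (lt_mem_nhds (by norm_num))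
  have h2 : ∀ᶠ (α : ℝ) in nhdsWithin 1 (Set.Ico 0 1), α ∈ Set.Ico (0:ℝ) 1 :=
    eventually_mem_nhdsWithin
  have key : (fun α : ℝ => kappaAlpha G α x y / (1 - α))
      =ᶠ[nhdsWithin 1 (Set.Ico 0 1)] (fun _ => kappa G x y) := by
    filter_upwards [h1, h2] with α hα1 hα2
    exact LLY.MW.kappaAlpha_div_eq hconn hne (le_of_lt hα1) hα2.2
  exact Filter.Tendsto.congr' key.symm tendsto_const_nhds
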